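/- Let d, T ≥ 1, σ > 0, τ > 0, and let x_1, …, x_T ∈ ℝ^d with ‖x_i‖ ≤ 1 for every i. Let K be the T×T matrix with entries K_{ij} = τ² ⟨x_i, x_j⟩. Then the Gaussian information gain of the amplitude-scaled linear kernel satisfies (1/2) · log det(I_T + σ^{-2} K) ≤ (d/2) · log(1 + τ² T / σ²). -/

import Mathlib

open Matrix
open scoped RealInnerProductSpace

/-- Information gain of the amplitude-scaled linear kernel: if `‖x_i‖ ≤ 1` and
`K_{ij} = τ² ⟨x_i, x_j⟩`, then
`(1/2) log det(I_T + σ^{-2} K) ≤ (d/2) log(1 + τ² T / σ²)`. -/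
theorem linear_kernel_information_gain (d T : ℕ) (hd : 1 ≤ d) (hT : 1 ≤ T)
    (σ τ : ℝ) (hσ : 0 < σ) (hτ : 0 < τ)
    (x : Fin T → EuclideanSpace ℝ (Fin d)) (hx : ∀ i, ‖x i‖ ≤ 1)
    (K : Matrix (Fin T) (Fin T) ℝ)
    (hK : ∀ i j, K i j = τ ^ 2 * ⟪x i, x j⟫) :
    (1 / 2 : ℝ) * Real.log ((1 + (σ ^ 2)⁻¹ • K).det) ≤
      (d / 2 : ℝ) * Real.log (1 + τ ^ 2 * T / σ ^ 2) := by
  set c : ℝ := (σ ^ 2)⁻¹ * τ ^ 2 with hc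
  have hc0 : 0 < c := by positivity
  set X : Matrix (Fin d) (Fin T) ℝ := fun k i => x i k with hXdef
  -- rewrite σ⁻² K as (c • Xᵀ) * X
  have hKeq : (σ ^ 2)⁻¹ • K = (c • Xᵀ) * X := by
    ext i j
    simp only [Matrix.smul_apply, hK, Matrix.mul_apply, Matrix.smul_apply,
      Matrix.transpose_apply, smul_eq_mul, PiLp.inner_apply, RCLike.inner_apply,
      conj_trivial, Finset.mul_sum]
    apply Finset.sum_congr rfl
    intro k _
    simp only [hXdef]
    ring
  set M : Matrix (Fin d) (Fin d) ℝ := 1 + c • (X * Xᵀ) with hMdef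
  have hdet : (1 + (σ ^ 2)⁻¹ • K).det = M.det := by
    rw [hKeq, Matrix.det_one_add_mul_comm, hMdef, Matrix.mul_smul]
  have hXXh : (X * Xᵀ).IsHermitian := by
    have := Matrix.isHermitian_mul_conjTranspose_self X
    simpa using this
  have hM : M.IsHermitian := by
    show Mᴴ = M
    rw [hMdef]
    simp [Matrix.conjTranspose_add, Matrix.conjTranspose_smul, Matrix.conjTranspose_one,
      hXXh.eq]
  -- eigenvalue bounds
  set b : ℝ := 1 + c * T with hb
  have hb1 : (1 : ℝ) ≤ b := by
    have : 0 ≤ c * T := by positivity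
    linarith
  have heig : ∀ i, 1 ≤ hM.eigenvalues i ∧ hM.eigenvalues i ≤ b := by
    intro i
    set v : EuclideanSpace ℝ (Fin d) := hM.eigenvectorBasis i with hv
    have hvnorm : ‖v‖ = 1 := hM.eigenvectorBasis.orthonormal.1 i
    have hvv : (⇑v) ⬝ᵥ (⇑v) = 1 := by
      have : ⟪v, v⟫ = 1 := by
        rw [real_inner_self_eq_norm_sq, hvnorm]; norm_num
      rw [EuclideanSpace.inner_eq_star_dotProduct] at this; simpa using this
    have hval : hM.eigenvalues i =
        1 + c * ∑ j, (∑ k, X k j * v k) ^ 2 := by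
      have h1 := hM.eigenvalues_eq i
      rw [h1]
      have hstar : star (⇑(hM.eigenvectorBasis i)) = ⇑v := by
        simp [hv]
      rw [hstar]
      have : M *ᵥ ⇑v = (⇑v) + c • ((X * Xᵀ) *ᵥ ⇑v) := by
        simp [hMdef, Matrix.add_mulVec, Matrix.smul_mulVec]
      rw [this]
      have hsplit : (⇑v) ⬝ᵥ ((⇑v) + c • ((X * Xᵀ) *ᵥ ⇑v))
          = (⇑v) ⬝ᵥ (⇑v) + c * ((⇑v) ⬝ᵥ ((X * Xᵀ) *ᵥ ⇑v)) := by
        simp [dotProduct_add, dotProduct_smul]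
      have hquad : (⇑v) ⬝ᵥ ((X * Xᵀ) *ᵥ ⇑v) = ∑ j, (∑ k, X k j * v k) ^ 2 := by
        rw [← Matrix.mulVec_mulVec, Matrix.dotProduct_mulVec, ← Matrix.mulVec_transpose]
        simp only [dotProduct, Matrix.mulVec, dotProduct, Matrix.transpose_apply]
        apply Finset.sum_congr rfl
        intro j _
        rw [sq]
      rw [hsplit, hquad, hvv]
      norm_num
    constructor
    · rw [hval]
      have : 0 ≤ c * ∑ j, (∑ k, X k j * v k) ^ 2 := by positivity
      linarith
    · rw [hval, hb]
      have hsum : ∑ j, (∑ k, X k j * v k) ^ 2 ≤ (T : ℝ) := by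
        calc ∑ j, (∑ k, X k j * v k) ^ 2 ≤ ∑ _j : Fin T, (1 : ℝ) := by
              apply Finset.sum_le_sum
              intro j _
              have hinner : (∑ k, X k j * v k) = ⟪x j, v⟫ := by
                simp [PiLp.inner_apply, RCLike.inner_apply, conj_trivial, hXdef]
                exact Finset.sum_congr rfl fun _ _ => mul_comm _ _
              rw [hinner]
              have habs : |⟪x j, v⟫| ≤ ‖x j‖ * ‖v‖ := abs_real_inner_le_norm _ _
              have h1 : ‖x j‖ * ‖v‖ ≤ 1 := by
                rw [hvnorm, mul_one]; exact hx j
              have := abs_le.mp (habs.trans h1)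
              nlinarith [this.1, this.2]
          _ = (T : ℝ) := by simp
      nlinarith [hc0.le, hsum]
  have hdetM : M.det = ∏ i, hM.eigenvalues i := by
    simpa using hM.det_eq_prod_eigenvalues
  have hprod_le : ∏ i, hM.eigenvalues i ≤ b ^ d := by
    calc ∏ i, hM.eigenvalues i ≤ ∏ _i : Fin d, b := by
          apply Finset.prod_le_prod
          · intro i _; linarith [(heig i).1]
          · intro i _; exact (heig i).2
      _ = b ^ d := by simp
  have hprod_pos : (0 : ℝ) < ∏ i, hM.eigenvalues i := by
    apply Finset.prod_pos
    intro i _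
    linarith [(heig i).1]
  have hlog : Real.log ((1 + (σ ^ 2)⁻¹ • K).det) ≤ (d : ℝ) * Real.log b := by
    rw [hdet, hdetM, ← Real.log_pow]
    exact Real.log_le_log hprod_pos hprod_le
  have hbeq : b = 1 + τ ^ 2 * T / σ ^ 2 := by
    rw [hb, hc]; ring
  rw [← hbeq]
  have hd2 : (1 / 2 : ℝ) * ((d : ℝ) * Real.log b) = (d / 2 : ℝ) * Real.log b := by ring
  calc (1 / 2 : ℝ) * Real.log ((1 + (σ ^ 2)⁻¹ • K).det)
      ≤ (1 / 2 : ℝ) * ((d : ℝ) * Real.log b) := by linarith [hlog]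
    _ = (d / 2 : ℝ) * Real.log b := hd2
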